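/- Let q be an odd prime power and π = Ps(χ, χ⁻¹) an irreducible principal series representation of PGL₂(F_q). The normalized Bessel function B_{π,ψ}(g) = (1/|N|) Σ_{n∈N} ψ^{−1}(n) χ_π(gn) satisfies B_{π,ψ}(h) = 0 for every h ∈ H with h ≠ 1, where H is the split diagonal torus. -/
import Mathlib


open Matrix

noncomputable section

variable (F : Type) [Field F] [Fintype F] [DecidableEq F]

/-- The upper unitriangular matrix `[[1,b],[0,1]]` as an element of `GL₂(F_q)`,
identifying the unipotent radical `N` with `F_q`. -/
def unip (b : F) : GL (Fin 2) F where
  val := !![1, b; 0, 1]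
  inv := !![1, -b; 0, 1]
  val_inv := by
    ext i j
    fin_cases i <;> fin_cases j <;>
      simp [Matrix.mul_apply, Fin.sum_univ_succ, Matrix.one_apply]
  inv_val := by
    ext i j
    fin_cases i <;> fin_cases j <;>
      simp [Matrix.mul_apply, Fin.sum_univ_succ, Matrix.one_apply]

/-- The character `χ_π` of the principal series `π = Ps(χ, χ⁻¹)` of `PGL₂(F_q)`, given by
the induced character formula
`χ_π(g) = (1/|B|) ∑_{x ∈ GL₂(F_q), x g x⁻¹ ∈ B} χ((xgx⁻¹)₀₀ / (xgx⁻¹)₁₁)`,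
where `B` is the Borel subgroup of upper triangular matrices, `|B| = q(q-1)²`. -/
def psChar (χ : MulChar F ℂ) (g : GL (Fin 2) F) : ℂ :=
  ((Fintype.card F * (Fintype.card F - 1) ^ 2 : ℕ) : ℂ)⁻¹ *
    ∑ x : GL (Fin 2) F,
      if ((x * g * x⁻¹ : GL (Fin 2) F) : Matrix (Fin 2) (Fin 2) F) 1 0 = 0 then
        χ (((x * g * x⁻¹ : GL (Fin 2) F) : Matrix (Fin 2) (Fin 2) F) 0 0 /
            ((x * g * x⁻¹ : GL (Fin 2) F) : Matrix (Fin 2) (Fin 2) F) 1 1)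
      else 0


lemma psChar_conj (χ : MulChar F ℂ) (u g : GL (Fin 2) F) :
    psChar F χ (u * g * u⁻¹) = psChar F χ g := by
  unfold psChar
  congr 1
  refine Fintype.sum_bijective (· * u) (Group.mulRight_bijective u) _ _ fun x => ?_
  have : x * (u * g * u⁻¹) * x⁻¹ = (x * u) * g * (x * u)⁻¹ := by group
  rw [this]

lemma conj_h (a b : F) (ha1 : a ≠ 1) (h : GL (Fin 2) F)
    (hh : (h : Matrix (Fin 2) (Fin 2) F) = !![a, 0; 0, 1]) :
    h * unip F b = unip F (a * b / (1 - a)) * h * (unip F (a * b / (1 - a)))⁻¹ := by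
  have h1a : (1 : F) - a ≠ 0 := sub_ne_zero.2 (Ne.symm ha1)
  ext i j
  fin_cases i <;> fin_cases j <;>
    · simp [unip, Units.val_mul, hh, Matrix.mul_apply, Fin.sum_univ_succ]
      try field_simp
      try ring

/-- The normalized Bessel function of `π` with respect to a nontrivial additive character
`ψ` of `F_q ≅ N`: `B_{π,ψ}(g) = (1/|N|) ∑_{n ∈ N} ψ⁻¹(n) χ_π(gn)`. -/
def bessel (χ : MulChar F ℂ) (ψ : AddChar F ℂ) (g : GL (Fin 2) F) : ℂ :=
  ((Fintype.card F : ℕ) : ℂ)⁻¹ * ∑ b : F, ψ (-b) * psChar F χ (g * unip F b)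

/-- Let `q` be an odd prime power and `π = Ps(χ, χ⁻¹)` an irreducible principal series of
`PGL₂(F_q)`. The normalized Bessel function `B_{π,ψ}` vanishes at every element
`h = diag(a,1)` of the split torus `H` with `h ≠ 1` (i.e. `a ≠ 1`). -/
theorem stmt_16 (hodd : Odd (Fintype.card F)) (χ : MulChar F ℂ) (hχ : χ ^ 2 ≠ 1)
    (ψ : AddChar F ℂ) (hψ : ∃ x, ψ x ≠ 1)
    (a : F) (ha : a ≠ 0) (ha1 : a ≠ 1) (h : GL (Fin 2) F)
    (hh : (h : Matrix (Fin 2) (Fin 2) F) = !![a, 0; 0, 1]) :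
    bessel F χ ψ h = 0 := by
  have key : ∀ b : F, psChar F χ (h * unip F b) = psChar F χ h := by
    intro b
    rw [conj_h F a b ha1 h hh, psChar_conj]
  unfold bessel
  simp only [key]
  rw [← Finset.sum_mul]
  have : ∑ b : F, ψ (-b) = 0 := by
    rw [Fintype.sum_equiv (Equiv.neg F) _ (fun b => ψ b) (fun b => by simp)]
    refine AddChar.sum_eq_zero_iff_ne_zero.2 ?_
    rcases hψ with ⟨x, hx⟩
    intro h0
    exact hx (by simp [h0])
  rw [this, zero_mul, mul_zero]

end
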